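/- Let (E,d) be a metric space, A ⊆ E, ε > 0 and p > 1. Define f(x) = χ_p(d(x,A)/ε) for x ∈ E, where χ_p(x) = (1−x^p)^p for x ∈ [0,1] and χ_p(x) = 0 for x > 1, and d(x,A) = inf_{y∈A} d(x,y). Then for all x ∈ E, the local Lipschitz constant satisfies |∇f|(x) ≤ p²·ε^{−1}·𝟙_{A_ε \ A}(x). -/

import Mathlib

open MeasureTheory Filter Topology
open scoped ENNReal

noncomputable def localLip {E : Type*} [MetricSpace E] (f : E → ℝ) (x : E) : ℝ≥0∞ :=
  Filter.limsup (fun y => ENNReal.ofReal (|f x - f y| / dist x y)) (𝓝[≠] x)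

/-- The profile `χ_p(x) = (1 - x^p)^p` for `0 ≤ x ≤ 1`, and `0` for `x > 1`. -/
noncomputable def chiP (p x : ℝ) : ℝ := if x ≤ 1 then (1 - x ^ p) ^ p else 0

section Aux

variable {p : ℝ}

lemma chiP_of_one_le (hp : 0 < p) {x : ℝ} (h : 1 ≤ x) : chiP p x = 0 := by
  unfold chiP
  rcases eq_or_lt_of_le h with h1 | h1
  · rw [if_pos h1.symm.le, ← h1]
    simp [Real.one_rpow, Real.zero_rpow hp.ne']
  · rw [if_neg (not_le.2 h1)]

lemma rpow_base_mem (hp : 0 ≤ p) {x : ℝ} (hx : 0 ≤ x) (hx1 : x ≤ 1) :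
    0 ≤ 1 - x ^ p ∧ 1 - x ^ p ≤ 1 := by
  constructor
  · have := Real.rpow_le_one hx hx1 hp
    linarith
  · have := Real.rpow_nonneg hx p
    linarith

lemma chiP_nonneg (hp : 0 < p) {x : ℝ} (hx : 0 ≤ x) : 0 ≤ chiP p x := by
  unfold chiP
  split_ifs with h
  · exact Real.rpow_nonneg (rpow_base_mem hp.le hx h).1 p
  · exact le_refl 0

lemma chiP_le_one (hp : 0 < p) {x : ℝ} (hx : 0 ≤ x) : chiP p x ≤ 1 := by
  unfold chiP
  split_ifs with h
  · exact Real.rpow_le_one (rpow_base_mem hp.le hx h).1 (rpow_base_mem hp.le hx h).2 hp.le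
  · exact zero_le_one

/-- Lipschitz bound for `chiP` on `[0,1]`. -/
lemma chiP_lipschitzOn (hp : 1 < p) {s t : ℝ} (hs : s ∈ Set.Icc (0:ℝ) 1)
    (ht : t ∈ Set.Icc (0:ℝ) 1) : |chiP p s - chiP p t| ≤ p ^ 2 * |s - t| := by
  have hp0 : (0:ℝ) < p := lt_trans one_pos hp
  set g : ℝ → ℝ := fun x => (1 - x ^ p) ^ p with hg
  set g' : ℝ → ℝ := fun x => p * (1 - x ^ p) ^ (p - 1) * -(p * x ^ (p - 1)) with hg'
  have hderiv : ∀ u ∈ Set.Icc (0:ℝ) 1, HasDerivWithinAt g (g' u) (Set.Icc (0:ℝ) 1) u := by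
    intro u hu
    have h1 : HasDerivAt (fun x : ℝ => x ^ p) (p * u ^ (p - 1)) u :=
      Real.hasDerivAt_rpow_const (Or.inr hp.le)
    have h2 : HasDerivAt (fun x : ℝ => 1 - x ^ p) (-(p * u ^ (p - 1))) u := h1.const_sub 1
    have h3 : HasDerivAt (fun v : ℝ => v ^ p) (p * (1 - u ^ p) ^ (p - 1)) (1 - u ^ p) :=
      Real.hasDerivAt_rpow_const (Or.inr hp.le)
    exact (h3.comp u h2).hasDerivWithinAt
  have hbound : ∀ u ∈ Set.Icc (0:ℝ) 1, ‖g' u‖ ≤ p ^ 2 := by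
    intro u hu
    obtain ⟨hb0, hb1⟩ := rpow_base_mem hp0.le hu.1 hu.2
    have e1 : (1 - u ^ p) ^ (p - 1) ≤ 1 := Real.rpow_le_one hb0 hb1 (by linarith)
    have e2 : u ^ (p - 1) ≤ 1 := Real.rpow_le_one hu.1 hu.2 (by linarith)
    have e3 : 0 ≤ (1 - u ^ p) ^ (p - 1) := Real.rpow_nonneg hb0 _
    have e4 : 0 ≤ u ^ (p - 1) := Real.rpow_nonneg hu.1 _
    have hpos : 0 ≤ (p * (1 - u ^ p) ^ (p - 1)) * (p * u ^ (p - 1)) := by positivity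
    have habs : p * (1 - u ^ p) ^ (p - 1) * -(p * u ^ (p - 1)) ≤ 0 := by nlinarith [hpos]
    have hval : ‖g' u‖ = -(p * (1 - u ^ p) ^ (p - 1) * -(p * u ^ (p - 1))) := by
      rw [Real.norm_eq_abs]; exact abs_of_nonpos habs
    rw [hval]
    have m1 : p * (1 - u ^ p) ^ (p - 1) ≤ p := by nlinarith
    have m2 : p * u ^ (p - 1) ≤ p := by nlinarith
    calc -(p * (1 - u ^ p) ^ (p - 1) * -(p * u ^ (p - 1)))
        = (p * (1 - u ^ p) ^ (p - 1)) * (p * u ^ (p - 1)) := by ring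
      _ ≤ p * p := mul_le_mul m1 m2 (by positivity) hp0.le
      _ = p ^ 2 := (sq p).symm
  have key := (convex_Icc (0:ℝ) 1).norm_image_sub_le_of_norm_hasDerivWithin_le hderiv hbound ht hs
  have hgs : chiP p s = g s := if_pos hs.2
  have hgt : chiP p t = g t := if_pos ht.2
  rw [hgs, hgt]
  simpa [Real.norm_eq_abs] using key

/-- Global Lipschitz bound for `chiP` on `[0,∞)`. -/
lemma chiP_lip (hp : 1 < p) {s t : ℝ} (hs : 0 ≤ s) (ht : 0 ≤ t) :
    |chiP p s - chiP p t| ≤ p ^ 2 * |s - t| := by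
  have hp0 : (0:ℝ) < p := lt_trans one_pos hp
  have hp2 : (0:ℝ) ≤ p ^ 2 := sq_nonneg p
  wlog hst : s ≤ t generalizing s t
  · rw [abs_sub_comm, abs_sub_comm s t]
    exact this ht hs (le_of_not_ge hst)
  by_cases ht1 : t ≤ 1
  · exact chiP_lipschitzOn hp ⟨hs, hst.trans ht1⟩ ⟨ht, ht1⟩
  · push_neg at ht1
    rw [chiP_of_one_le hp0 ht1.le]
    by_cases hs1 : 1 ≤ s
    · rw [chiP_of_one_le hp0 hs1]
      simp [hp2, abs_nonneg, mul_nonneg]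
    · push_neg at hs1
      have h1 : |chiP p s - 0| ≤ p ^ 2 * |s - 1| := by
        rw [← chiP_of_one_le hp0 le_rfl]
        exact chiP_lipschitzOn hp ⟨hs, hs1.le⟩ ⟨zero_le_one, le_rfl⟩
      refine h1.trans (mul_le_mul_of_nonneg_left ?_ hp2)
      rw [abs_of_nonpos (by linarith), abs_of_nonpos (by linarith)]
      linarith

end Aux

lemma localLip_le_of_lip {E : Type*} [MetricSpace E] (f : E → ℝ) (x : E) (C : ℝ)
    (h : ∀ y, |f x - f y| ≤ C * dist x y) : localLip f x ≤ ENNReal.ofReal C := by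
  refine Filter.limsup_le_of_le (by isBoundedDefault) ?_
  filter_upwards [self_mem_nhdsWithin] with y hy
  have hd : 0 < dist x y := dist_pos.2 (Ne.symm hy)
  exact ENNReal.ofReal_le_ofReal ((div_le_iff₀ hd).2 (by rw [mul_comm]; exact (h y).trans_eq (mul_comm _ _)))

lemma localLip_eq_zero_of_pow_bound {E : Type*} [MetricSpace E] (f : E → ℝ) (x : E)
    {C p : ℝ} (hp : 1 < p)
    (h : ∀ᶠ y in 𝓝[≠] x, |f x - f y| ≤ C * dist x y ^ p) : localLip f x = 0 := by
  rcases eq_or_neBot (𝓝[≠] x) with hb | hb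
  · unfold localLip
    rw [hb, Filter.limsup_bot]
    rfl
  · have htd : Tendsto (fun y => dist x y) (𝓝[≠] x) (𝓝 0) := by
      have h1 : Tendsto (fun y => dist x y) (𝓝 x) (𝓝 (dist x x)) :=
        (continuous_const.dist continuous_id).tendsto x
      rw [dist_self] at h1
      exact h1.mono_left nhdsWithin_le_nhds
    have hrp : Tendsto (fun y => C * dist x y ^ (p - 1)) (𝓝[≠] x) (𝓝 0) := by
      have hc : ContinuousAt (fun d : ℝ => d ^ (p - 1)) 0 :=
        Real.continuousAt_rpow_const 0 (p - 1) (Or.inr (by linarith))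
      have h2 := hc.tendsto.comp htd
      rw [Real.zero_rpow (by intro h0; linarith [sub_eq_zero.1 h0] : p - 1 ≠ 0)] at h2
      simpa using h2.const_mul C
    have hreal : Tendsto (fun y => |f x - f y| / dist x y) (𝓝[≠] x) (𝓝 0) := by
      refine squeeze_zero'
        (Filter.Eventually.of_forall fun y => div_nonneg (abs_nonneg _) dist_nonneg) ?_ hrp
      filter_upwards [h, self_mem_nhdsWithin] with y hy hyx
      have hd : 0 < dist x y := dist_pos.2 (Ne.symm hyx)
      rw [div_le_iff₀ hd]
      have e : dist x y ^ p = dist x y ^ (p - 1) * dist x y := by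
        rw [← Real.rpow_add_one hd.ne' (p - 1)]
        norm_num
      calc |f x - f y| ≤ C * dist x y ^ p := hy
        _ = C * dist x y ^ (p - 1) * dist x y := by rw [e, mul_assoc]
    have := ENNReal.tendsto_ofReal hreal
    rw [ENNReal.ofReal_zero] at this
    exact this.limsup_eq

/-- Lemma `smooth_indicator`: the local Lipschitz constant of
`x ↦ χ_p(d(x,A)/ε)` is at most `p² ε⁻¹ 𝟙_{A_ε \ A}`. -/
theorem stmt7 {E : Type*} [MetricSpace E] (A : Set E) (ε : ℝ) (hε : 0 < ε)
    (p : ℝ) (hp : 1 < p) (x : E) :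
    localLip (fun y => chiP p (Metric.infDist y A / ε)) x ≤
      (Metric.thickening ε A \ A).indicator (fun _ => ENNReal.ofReal (p ^ 2 / ε)) x := by
  have hp0 : (0:ℝ) < p := lt_trans one_pos hp
  set f : E → ℝ := fun y => chiP p (Metric.infDist y A / ε) with hf
  have hnn : ∀ y : E, 0 ≤ Metric.infDist y A / ε :=
    fun y => div_nonneg Metric.infDist_nonneg hε.le
  by_cases hmem : x ∈ Metric.thickening ε A \ A
  · rw [Set.indicator_of_mem hmem]
    refine localLip_le_of_lip f x _ fun y => ?_
    have h1 := chiP_lip hp (hnn x) (hnn y)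
    have h2 : |Metric.infDist x A / ε - Metric.infDist y A / ε| ≤ dist x y / ε := by
      rw [div_sub_div_same, abs_div, abs_of_pos hε]
      have h3 := (Metric.lipschitz_infDist_pt A).dist_le_mul x y
      rw [Real.dist_eq] at h3
      push_cast at h3
      rw [one_mul] at h3
      exact div_le_div_of_nonneg_right h3 hε.le
    calc |f x - f y| ≤ p ^ 2 * |Metric.infDist x A / ε - Metric.infDist y A / ε| := h1
      _ ≤ p ^ 2 * (dist x y / ε) := by
          exact mul_le_mul_of_nonneg_left h2 (sq_nonneg p)
      _ = p ^ 2 / ε * dist x y := by ring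
  · rw [Set.indicator_of_notMem hmem]
    rw [Set.mem_diff, not_and_or, not_not] at hmem
    refine le_of_eq ?_
    rcases hmem with hth | hxA
    · -- x not in the thickening
      rcases Set.eq_empty_or_nonempty A with hA | hA
      · refine localLip_eq_zero_of_pow_bound f x (C := 0) hp ?_
        filter_upwards with y
        simp [hf, hA, Metric.infDist_empty, Real.rpow_nonneg dist_nonneg]
      · have hxd : ε ≤ Metric.infDist x A := by
          by_contra hc
          exact hth ((Metric.mem_thickening_iff_infDist_lt hA).2 (lt_of_not_ge hc))
        have hfx : f x = 0 := chiP_of_one_le hp0 ((one_le_div hε).2 hxd)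
        refine localLip_eq_zero_of_pow_bound f x (C := p ^ p / ε ^ p) hp ?_
        have hball : Metric.ball x ε ∈ 𝓝[≠] x :=
          nhdsWithin_le_nhds (Metric.ball_mem_nhds x hε)
        filter_upwards [hball] with y hy
        rw [Metric.mem_ball, dist_comm] at hy
        set t := Metric.infDist y A / ε with hdef
        have ht0 : 0 ≤ t := hnn y
        rw [hfx, abs_sub_comm, sub_zero]
        by_cases ht1 : 1 ≤ t
        · rw [hf]
          simp only
          rw [← hdef, chiP_of_one_le hp0 ht1, abs_of_nonneg le_rfl]
          positivity
        · push_neg at ht1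
          have hlow : ε - dist x y ≤ Metric.infDist y A := by
            have := Metric.infDist_le_infDist_add_dist (x := x) (y := y) (s := A)
            linarith
          have h1t : 1 - t ≤ dist x y / ε := by
            rw [hdef]
            rw [sub_le_iff_le_add, ← add_div, le_div_iff₀ hε]
            nlinarith
          have hB := one_add_mul_self_le_rpow_one_add
            (s := t - 1) (by linarith) hp.le
          have hB' : 1 - t ^ p ≤ p * (1 - t) := by
            have : (1 + (t - 1) : ℝ) = t := by ring
            rw [this] at hB
            nlinarith
          have hb0 : 0 ≤ 1 - t ^ p := (rpow_base_mem hp0.le ht0 ht1.le).1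
          have hfy : f y = (1 - t ^ p) ^ p := by
            rw [hf]; simp only; rw [← hdef, chiP]; rw [if_pos ht1.le]
          rw [hfy, abs_of_nonneg (Real.rpow_nonneg hb0 p)]
          calc (1 - t ^ p) ^ p ≤ (p * (dist x y / ε)) ^ p := by
                refine Real.rpow_le_rpow hb0 ?_ hp0.le
                calc 1 - t ^ p ≤ p * (1 - t) := hB'
                  _ ≤ p * (dist x y / ε) := mul_le_mul_of_nonneg_left h1t hp0.le
            _ = p ^ p / ε ^ p * dist x y ^ p := by
                rw [Real.mul_rpow hp0.le (div_nonneg dist_nonneg hε.le),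
                  Real.div_rpow dist_nonneg hε.le]
                ring
    · -- x ∈ A
      have hfx : f x = 1 := by
        rw [hf]
        simp only
        rw [Metric.infDist_zero_of_mem hxA, zero_div, chiP, if_pos zero_le_one,
          Real.zero_rpow hp0.ne', sub_zero, Real.one_rpow]
      refine localLip_eq_zero_of_pow_bound f x (C := p / ε ^ p) hp ?_
      have hball : Metric.ball x ε ∈ 𝓝[≠] x :=
        nhdsWithin_le_nhds (Metric.ball_mem_nhds x hε)
      filter_upwards [hball] with y hy
      rw [Metric.mem_ball, dist_comm] at hy
      set t := Metric.infDist y A / ε with hdef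
      have ht0 : 0 ≤ t := hnn y
      have htle : t ≤ dist x y / ε := by
        rw [hdef]
        refine div_le_div_of_nonneg_right ?_ hε.le
        rw [dist_comm]
        exact Metric.infDist_le_dist_of_mem hxA
      have ht1 : t ≤ 1 := htle.trans (by rw [div_le_one hε]; exact hy.le)
      have htp1 : t ^ p ≤ 1 := Real.rpow_le_one ht0 ht1 hp0.le
      have hB := one_add_mul_self_le_rpow_one_add
        (s := -(t ^ p)) (by linarith) hp.le
      have hfy : f y = (1 - t ^ p) ^ p := by
        rw [hf]; simp only; rw [← hdef, chiP]; rw [if_pos ht1]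
      have hchi1 : f y ≤ 1 := by rw [← hdef] at *; rw [hf]; exact chiP_le_one hp0 ht0
      rw [hfx]
      have habs : |1 - f y| = 1 - f y := abs_of_nonneg (by linarith)
      rw [habs, hfy]
      have hB' : 1 - (1 - t ^ p) ^ p ≤ p * t ^ p := by
        have e : (1 + -(t ^ p) : ℝ) = 1 - t ^ p := by ring
        rw [e] at hB
        nlinarith
      calc 1 - (1 - t ^ p) ^ p ≤ p * t ^ p := hB'
        _ ≤ p * (dist x y / ε) ^ p := by
            exact mul_le_mul_of_nonneg_left (Real.rpow_le_rpow ht0 htle hp0.le) hp0.le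
        _ = p / ε ^ p * dist x y ^ p := by
            rw [Real.div_rpow dist_nonneg hε.le]; ring
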